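/- arXiv:1009.2051 — 2 statements merged into one kernel-verified Lean document; each statement's English description precedes it below -/
import Mathlib

section
/- Let d ≥ 2 be an integer and n a real number with n > d/2 + 1. Let (v_h)_{h∈Z^d_0} and (w_ℓ)_{ℓ∈Z^d_0} be families of vectors in C^d with h·v_h = 0 for all h ∈ Z^d_0, Σ_{h∈Z^d_0} |h|^{2n}|v_h|^2 < ∞ and Σ_{ℓ∈Z^d_0} |ℓ|^{2n}|w_ℓ|^2 < ∞. For each k ∈ Z^d_0 set z_k := i (2π)^{−d/2} Σ_{h∈Z^d_{0k}} [v_h·(k−h)] (|k|^n − |k−h|^n) w_{k−h}. Then Σ_{k∈Z^d_0} |z_k|^2 ≤ (2π)^{−d} · ( sup_{k∈Z^d_0} G_n(k) ) · ( Σ_{h∈Z^d_0} |h|^{2n}|v_h|^2 ) · ( Σ_{ℓ∈Z^d_0} |ℓ|^{2n}|w_ℓ|^2 ). -/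
noncomputable section

/-- Euclidean norm of a lattice point of `ℤ^d`. -/
def znorm {d : ℕ} (k : Fin d → ℤ) : ℝ := Real.sqrt (∑ i, ((k i : ℝ)) ^ 2)

/-- Squared norm `|h ∧ k|² = |h|²|k|² − (h·k)²` of the exterior product. -/
def wedgeSq {d : ℕ} (h k : Fin d → ℤ) : ℝ :=
  (∑ i, ((h i : ℝ)) ^ 2) * (∑ i, ((k i : ℝ)) ^ 2) - (∑ i, (h i : ℝ) * (k i : ℝ)) ^ 2

/-- Squared Hermitian norm of a vector of `ℂ^d`. -/
def cnormSq {d : ℕ} (a : Fin d → ℂ) : ℝ := ∑ i, Complex.normSq (a i)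

/-- The function `G_n : ℤ^d_0 → [0,∞]` of the paper:
`G_n(k) = Σ_{h ∈ ℤ^d_{0k}} |h ∧ k|² (|k|^n − |k−h|^n)² / (|h|^{2n+2}|k−h|^{2n})`. -/
def Gn (d : ℕ) (n : ℝ) (k : Fin d → ℤ) : ENNReal :=
  ∑' h : {h : Fin d → ℤ // h ≠ 0 ∧ h ≠ k},
    ENNReal.ofReal (wedgeSq h.1 k * (znorm k ^ n - znorm (k - h.1) ^ n) ^ 2 /
      (znorm h.1 ^ (2 * n + 2) * znorm (k - h.1) ^ (2 * n)))

open MeasureTheory ENNReal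

lemma csENN {ι : Type*} [Countable ι] (a b : ι → ℝ≥0∞) :
    (∑' i, a i * b i) ^ 2 ≤ (∑' i, a i ^ 2) * (∑' i, b i ^ 2) := by
  letI : MeasurableSpace ι := ⊤
  haveI : MeasurableSingletonClass ι := ⟨fun _ => trivial⟩
  have hmeas : ∀ f : ι → ℝ≥0∞, Measurable f := fun f s _ => trivial
  have hpq : Real.HolderConjugate 2 2 := ⟨by norm_num, by norm_num, by norm_num⟩
  have h := ENNReal.lintegral_mul_le_Lp_mul_Lq (Measure.count) hpq
      (hmeas a).aemeasurable (hmeas b).aemeasurable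
  simp only [Pi.mul_apply, lintegral_count] at h
  have h2 : (∑' i, a i * b i) ^ 2 ≤
      ((∑' i, a i ^ (2:ℝ)) ^ (1/(2:ℝ)) * (∑' i, b i ^ (2:ℝ)) ^ (1/(2:ℝ))) ^ 2 :=
    pow_le_pow_left₀ (by simp) h 2
  calc (∑' i, a i * b i) ^ 2 ≤ _ := h2
    _ = (∑' i, a i ^ 2) * (∑' i, b i ^ 2) := by
        rw [mul_pow]
        rw [← ENNReal.rpow_natCast ((∑' i, a i ^ (2:ℝ)) ^ (1/(2:ℝ))) 2,
            ← ENNReal.rpow_natCast ((∑' i, b i ^ (2:ℝ)) ^ (1/(2:ℝ))) 2,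
            ← ENNReal.rpow_mul, ← ENNReal.rpow_mul]
        norm_num


lemma cnormSq_nonneg {d : ℕ} (a : Fin d → ℂ) : 0 ≤ cnormSq a :=
  Finset.sum_nonneg fun i _ => Complex.normSq_nonneg _

lemma wedgeSq_nonneg {d : ℕ} (h k : Fin d → ℤ) : 0 ≤ wedgeSq h k :=
  sub_nonneg.mpr (Finset.sum_mul_sq_le_sq_mul_sq _ _ _)

lemma sumsq_pos {d : ℕ} {h : Fin d → ℤ} (hh : h ≠ 0) : 0 < ∑ i, ((h i : ℝ)) ^ 2 := by
  obtain ⟨i, hi⟩ := Function.ne_iff.mp hh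
  refine Finset.sum_pos' (fun j _ => sq_nonneg _) ⟨i, Finset.mem_univ i, ?_⟩
  have : (h i : ℝ) ≠ 0 := Int.cast_ne_zero.mpr hi
  positivity

lemma znorm_nonneg {d : ℕ} (k : Fin d → ℤ) : 0 ≤ znorm k := Real.sqrt_nonneg _

lemma znorm_pos {d : ℕ} {k : Fin d → ℤ} (hk : k ≠ 0) : 0 < znorm k :=
  Real.sqrt_pos.mpr (sumsq_pos hk)

lemma znorm_sq {d : ℕ} (k : Fin d → ℤ) : znorm k ^ 2 = ∑ i, ((k i : ℝ)) ^ 2 :=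
  Real.sq_sqrt (Finset.sum_nonneg fun i _ => sq_nonneg _)

lemma cs_complex {d : ℕ} (v : Fin d → ℂ) (m : Fin d → ℝ) :
    ‖∑ i, v i * (m i : ℂ)‖ ^ 2 ≤ cnormSq v * ∑ i, m i ^ 2 := by
  have hre : (∑ i, v i * (m i : ℂ)).re = ∑ i, (v i).re * m i := by
    rw [Complex.re_sum]
    exact Finset.sum_congr rfl fun i _ => by simp [Complex.mul_re]
  have him : (∑ i, v i * (m i : ℂ)).im = ∑ i, (v i).im * m i := by
    rw [Complex.im_sum]
    exact Finset.sum_congr rfl fun i _ => by simp [Complex.mul_im]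
  rw [Complex.sq_norm, Complex.normSq_apply, hre, him]
  have h1 := Finset.sum_mul_sq_le_sq_mul_sq Finset.univ (fun i => (v i).re) m
  have h2 := Finset.sum_mul_sq_le_sq_mul_sq Finset.univ (fun i => (v i).im) m
  have : cnormSq v = (∑ i, (v i).re ^ 2) + ∑ i, (v i).im ^ 2 := by
    rw [cnormSq, ← Finset.sum_add_distrib]
    exact Finset.sum_congr rfl fun i _ => by rw [Complex.normSq_apply]; ring
  rw [this, add_mul]
  have e1 : (∑ i, (v i).re * m i) * (∑ i, (v i).re * m i) = (∑ i, (v i).re * m i) ^ 2 := by ring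
  have e2 : (∑ i, (v i).im * m i) * (∑ i, (v i).im * m i) = (∑ i, (v i).im * m i) ^ 2 := by ring
  rw [e1, e2]
  exact add_le_add h1 h2

lemma proj_bound {d : ℕ} (h k : Fin d → ℤ) (hh : h ≠ 0) (v : Fin d → ℂ)
    (hdv : ∑ i, (h i : ℂ) * v i = 0) :
    (∑ i, ((h i : ℝ)) ^ 2) * ‖∑ i, v i * ((k i : ℝ) : ℂ)‖ ^ 2 ≤ cnormSq v * wedgeSq h k := by
  set S : ℝ := ∑ i, ((h i : ℝ)) ^ 2 with hS_def
  set P : ℝ := ∑ i, (k i : ℝ) * (h i : ℝ) with hP_def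
  set m : Fin d → ℝ := fun i => S * (k i : ℝ) - P * (h i : ℝ) with hm_def
  have hS : 0 < S := sumsq_pos hh
  have hvh : ∑ i, v i * ((h i : ℝ) : ℂ) = 0 := by
    rw [← hdv]; exact Finset.sum_congr rfl fun i _ => by push_cast; ring
  have hsum : ∑ i, v i * (m i : ℂ) = (S : ℂ) * ∑ i, v i * ((k i : ℝ) : ℂ) := by
    have : ∀ i, v i * (m i : ℂ) = (S:ℂ) * (v i * ((k i : ℝ):ℂ)) - (P:ℂ) * (v i * ((h i : ℝ):ℂ)) := by
      intro i; simp only [hm_def]; push_cast; ring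
    rw [Finset.sum_congr rfl fun i _ => this i, Finset.sum_sub_distrib, ← Finset.mul_sum,
      ← Finset.mul_sum, hvh, mul_zero, sub_zero]
  have hm2 : ∑ i, m i ^ 2 = S * wedgeSq h k := by
    have e1 : ∀ i, m i ^ 2 = S^2 * (k i:ℝ)^2 - (2*S*P)*((k i:ℝ)*(h i:ℝ)) + P^2*(h i:ℝ)^2 := by
      intro i; simp only [hm_def]; ring
    rw [Finset.sum_congr rfl fun i _ => e1 i]
    rw [Finset.sum_add_distrib, Finset.sum_sub_distrib, ← Finset.mul_sum, ← Finset.mul_sum,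
      ← Finset.mul_sum, ← hP_def, ← hS_def]
    have hPP : (∑ i, (h i : ℝ) * (k i : ℝ)) = P := by
      rw [hP_def]; exact Finset.sum_congr rfl fun i _ => mul_comm _ _
    rw [wedgeSq, hPP, ← hS_def]
    ring
  have key := cs_complex v m
  rw [hsum, hm2] at key
  have hnorm : ‖(S:ℂ) * ∑ i, v i * ((k i : ℝ) : ℂ)‖ ^ 2 = S^2 * ‖∑ i, v i * ((k i : ℝ) : ℂ)‖^2 := by
    rw [norm_mul, mul_pow, Complex.norm_real, Real.norm_eq_abs, abs_of_pos hS]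
  rw [hnorm] at key
  refine le_of_mul_le_mul_left ?_ hS
  calc S * (S * ‖∑ i, v i * ((k i : ℝ) : ℂ)‖ ^ 2) = S^2 * ‖∑ i, v i * ((k i : ℝ) : ℂ)‖^2 := by ring
    _ ≤ cnormSq v * (S * wedgeSq h k) := key
    _ = S * (cnormSq v * wedgeSq h k) := by ring

lemma sub_ne {d : ℕ} {h k : Fin d → ℤ} (hhk : h ≠ k) : k - h ≠ 0 :=
  sub_ne_zero.mpr (Ne.symm hhk)

lemma lam_nonneg {d : ℕ} (n : ℝ) (h k : Fin d → ℤ) :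
    0 ≤ wedgeSq h k * (znorm k ^ n - znorm (k - h) ^ n) ^ 2 /
      (znorm h ^ (2 * n + 2) * znorm (k - h) ^ (2 * n)) := by
  have := wedgeSq_nonneg h k
  have h1 := znorm_nonneg h
  have h2 := znorm_nonneg (k - h)
  positivity

lemma key_bound {d : ℕ} (n : ℝ) (k h : Fin d → ℤ) (hh : h ≠ 0) (hhk : h ≠ k)
    (v : Fin d → ℂ) (hdv : ∑ i, (h i : ℂ) * v i = 0) :
    ‖(∑ r, v r * ((k r - h r : ℤ) : ℂ)) * ((znorm k ^ n - znorm (k - h) ^ n : ℝ) : ℂ)‖ ≤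
      Real.sqrt (wedgeSq h k * (znorm k ^ n - znorm (k - h) ^ n) ^ 2 /
        (znorm h ^ (2 * n + 2) * znorm (k - h) ^ (2 * n))) *
      (znorm h ^ n * Real.sqrt (cnormSq v) * znorm (k - h) ^ n) := by
  have hzh : 0 < znorm h := znorm_pos hh
  have hzkh : 0 < znorm (k - h) := znorm_pos (sub_ne hhk)
  set Δ : ℝ := znorm k ^ n - znorm (k - h) ^ n with hΔ
  have hvh : ∑ i, v i * ((h i : ℝ) : ℂ) = 0 := by
    rw [← hdv]; exact Finset.sum_congr rfl fun i _ => by push_cast; ring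
  have hcoe : ∑ r, v r * ((k r - h r : ℤ) : ℂ) = ∑ r, v r * ((k r : ℝ) : ℂ) := by
    have : ∀ r, v r * ((k r - h r : ℤ) : ℂ) = v r * ((k r : ℝ) : ℂ) - v r * ((h r : ℝ) : ℂ) := by
      intro r; push_cast; ring
    rw [Finset.sum_congr rfl fun r _ => this r, Finset.sum_sub_distrib, hvh, sub_zero]
  rw [hcoe, norm_mul, Complex.norm_real, Real.norm_eq_abs]
  set X : ℝ := ‖∑ r, v r * ((k r : ℝ) : ℂ)‖ with hX
  have hXnn : 0 ≤ X := norm_nonneg _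
  have hRHSnn : 0 ≤ Real.sqrt (wedgeSq h k * Δ ^ 2 /
      (znorm h ^ (2 * n + 2) * znorm (k - h) ^ (2 * n))) *
      (znorm h ^ n * Real.sqrt (cnormSq v) * znorm (k - h) ^ n) := by positivity
  have two_cast : (2 : ℝ) = ((2 : ℕ) : ℝ) := by norm_num
  have e1 : znorm h ^ n * znorm h ^ n = znorm h ^ (2 * n) := by
    rw [← Real.rpow_add hzh]; ring_nf
  have e2 : znorm (k - h) ^ n * znorm (k - h) ^ n = znorm (k - h) ^ (2 * n) := by
    rw [← Real.rpow_add hzkh]; ring_nf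
  have e3 : znorm h ^ (2 * n + 2) = znorm h ^ (2 * n) * znorm h ^ (2 : ℕ) := by
    rw [Real.rpow_add hzh, two_cast, Real.rpow_natCast]
  have hprop := proj_bound h k hh v hdv
  rw [← znorm_sq h] at hprop
  -- squared inequality
  have hsq : (X * |Δ|) ^ 2 ≤ (Real.sqrt (wedgeSq h k * Δ ^ 2 /
      (znorm h ^ (2 * n + 2) * znorm (k - h) ^ (2 * n))) *
      (znorm h ^ n * Real.sqrt (cnormSq v) * znorm (k - h) ^ n)) ^ 2 := by
    have hr2 : (Real.sqrt (wedgeSq h k * Δ ^ 2 /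
        (znorm h ^ (2 * n + 2) * znorm (k - h) ^ (2 * n))) *
        (znorm h ^ n * Real.sqrt (cnormSq v) * znorm (k - h) ^ n)) ^ 2 =
        cnormSq v * wedgeSq h k * Δ ^ 2 / znorm h ^ (2 : ℕ) := by
      rw [mul_pow, Real.sq_sqrt (lam_nonneg n h k), mul_pow, mul_pow,
        Real.sq_sqrt (cnormSq_nonneg v)]
      rw [show (znorm h ^ n) ^ 2 = znorm h ^ n * znorm h ^ n from sq (znorm h ^ n) ▸ by ring,
        show (znorm (k - h) ^ n) ^ 2 = znorm (k - h) ^ n * znorm (k - h) ^ n from by ring,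
        e1, e2, e3]
      have hne1 : znorm h ^ (2 * n) ≠ 0 := ne_of_gt (Real.rpow_pos_of_pos hzh _)
      have hne2 : znorm (k - h) ^ (2 * n) ≠ 0 := ne_of_gt (Real.rpow_pos_of_pos hzkh _)
      have hne3 : znorm h ^ (2 : ℕ) ≠ 0 := by positivity
      field_simp
      ring
    rw [hr2, mul_pow, sq_abs, le_div_iff₀ (by positivity)]
    calc X ^ 2 * Δ ^ 2 * znorm h ^ (2:ℕ) = (znorm h ^ (2:ℕ) * X ^ 2) * Δ ^ 2 := by ring
      _ ≤ cnormSq v * wedgeSq h k * Δ ^ 2 :=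
          mul_le_mul_of_nonneg_right hprop (sq_nonneg _)
  calc X * |Δ| = Real.sqrt ((X * |Δ|) ^ 2) := (Real.sqrt_sq (by positivity)).symm
    _ ≤ Real.sqrt ((Real.sqrt (wedgeSq h k * Δ ^ 2 /
        (znorm h ^ (2 * n + 2) * znorm (k - h) ^ (2 * n))) *
        (znorm h ^ n * Real.sqrt (cnormSq v) * znorm (k - h) ^ n)) ^ 2) :=
        Real.sqrt_le_sqrt hsq
    _ = _ := Real.sqrt_sq hRHSnn

lemma ofReal_norm_tsum_le {ι : Type*} [Countable ι] (f : ι → ℂ) :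
    ENNReal.ofReal ‖∑' i, f i‖ ≤ ∑' i, ENNReal.ofReal ‖f i‖ := by
  by_cases hs : Summable f
  · have hn : Summable fun i => ‖f i‖ := summable_norm_iff.mpr hs
    calc ENNReal.ofReal ‖∑' i, f i‖ ≤ ENNReal.ofReal (∑' i, ‖f i‖) :=
          ENNReal.ofReal_le_ofReal (norm_tsum_le_tsum_norm hn)
      _ = ∑' i, ENNReal.ofReal ‖f i‖ :=
          ENNReal.ofReal_tsum_of_nonneg (fun i => norm_nonneg _) hn
  · rw [tsum_eq_zero_of_not_summable hs]; simp


lemma per_k {d : ℕ} (n : ℝ) (v w : (Fin d → ℤ) → Fin d → ℂ)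
    (hdiv : ∀ h : Fin d → ℤ, h ≠ 0 → ∑ i, (h i : ℂ) * v h i = 0)
    (k : Fin d → ℤ) (z : Fin d → ℂ)
    (hzk : z = fun i => Complex.I * ((2 * Real.pi) ^ (-(d : ℝ) / 2) : ℝ) *
        ∑' h : {h : Fin d → ℤ // h ≠ 0 ∧ h ≠ k}, (∑ r, v h.1 r * ((k r - h.1 r : ℤ) : ℂ)) *
            ((znorm k ^ n - znorm (k - h.1) ^ n : ℝ) : ℂ) * w (k - h.1) i) :
    ENNReal.ofReal (cnormSq z) ≤ ENNReal.ofReal ((2 * Real.pi) ^ (-(d : ℝ))) * Gn d n k *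
      ∑' h : {h : Fin d → ℤ // h ≠ 0 ∧ h ≠ k},
        ENNReal.ofReal (znorm h.1 ^ (2 * n) * cnormSq (v h.1)) *
        ENNReal.ofReal (znorm (k - h.1) ^ (2 * n) * cnormSq (w (k - h.1))) := by
  set c : ℝ := (2 * Real.pi) ^ (-(d : ℝ) / 2) with hc
  have h2pi : (0 : ℝ) < 2 * Real.pi := by positivity
  have hcnn : 0 ≤ c := Real.rpow_nonneg h2pi.le _
  set ι := {h : Fin d → ℤ // h ≠ 0 ∧ h ≠ k} with hι
  set lam : ι → ℝ := fun h => wedgeSq h.1 k * (znorm k ^ n - znorm (k - h.1) ^ n) ^ 2 /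
      (znorm h.1 ^ (2 * n + 2) * znorm (k - h.1) ^ (2 * n)) with hlam
  set a : ι → ℝ≥0∞ := fun h => ENNReal.ofReal (Real.sqrt (lam h)) with ha
  set Bv : ι → ℝ := fun h =>
    znorm h.1 ^ n * Real.sqrt (cnormSq (v h.1)) * znorm (k - h.1) ^ n with hBv
  have hBvnn : ∀ h, 0 ≤ Bv h := fun h => by
    have := znorm_nonneg h.1; have := znorm_nonneg (k - h.1); positivity
  set b : ι → Fin d → ℝ≥0∞ :=
    fun h i => ENNReal.ofReal (Bv h) * ENNReal.ofReal ‖w (k - h.1) i‖ with hb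
  -- step 1 : per coordinate bound
  have step1 : ∀ i, ENNReal.ofReal ‖z i‖ ≤ ENNReal.ofReal c * ∑' h : ι, a h * b h i := by
    intro i
    have hzi : ‖z i‖ = c * ‖∑' h : ι, (∑ r, v h.1 r * ((k r - h.1 r : ℤ) : ℂ)) *
        ((znorm k ^ n - znorm (k - h.1) ^ n : ℝ) : ℂ) * w (k - h.1) i‖ := by
      rw [hzk]
      simp only [norm_mul, Complex.norm_I, Complex.norm_real, one_mul, Real.norm_eq_abs,
        abs_of_nonneg hcnn]
      rfl
    rw [hzi, ENNReal.ofReal_mul hcnn]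
    refine mul_le_mul_right ?_ _
    refine (ofReal_norm_tsum_le _).trans ?_
    refine ENNReal.tsum_le_tsum fun h => ?_
    rw [norm_mul, ENNReal.ofReal_mul (norm_nonneg _)]
    have hkey := key_bound n k h.1 h.2.1 h.2.2 (v h.1) (hdiv h.1 h.2.1)
    calc ENNReal.ofReal ‖(∑ r, v h.1 r * ((k r - h.1 r : ℤ) : ℂ)) *
          ((znorm k ^ n - znorm (k - h.1) ^ n : ℝ) : ℂ)‖ * ENNReal.ofReal ‖w (k - h.1) i‖
        ≤ ENNReal.ofReal (Real.sqrt (lam h) * Bv h) * ENNReal.ofReal ‖w (k - h.1) i‖ :=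
          mul_le_mul_left (ENNReal.ofReal_le_ofReal hkey) _
      _ = a h * b h i := by
          rw [ENNReal.ofReal_mul (Real.sqrt_nonneg _), ha, hb, mul_assoc]
  -- step 4 : sum of a² is Gn
  have step4 : ∑' h : ι, a h ^ 2 = Gn d n k := by
    refine tsum_congr fun h => ?_
    rw [ha, ← ENNReal.ofReal_pow (Real.sqrt_nonneg _), Real.sq_sqrt (lam_nonneg n h.1 k)]
  -- step 5 : sum over i of b² sums
  have hBv2 : ∀ h : ι, Bv h ^ 2 =
      znorm h.1 ^ (2 * n) * cnormSq (v h.1) * znorm (k - h.1) ^ (2 * n) := by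
    intro h
    have hzh : 0 < znorm h.1 := znorm_pos h.2.1
    have hzkh : 0 < znorm (k - h.1) := znorm_pos (sub_ne h.2.2)
    have e1 : znorm h.1 ^ n * znorm h.1 ^ n = znorm h.1 ^ (2 * n) := by
      rw [← Real.rpow_add hzh]; ring_nf
    have e2 : znorm (k - h.1) ^ n * znorm (k - h.1) ^ n = znorm (k - h.1) ^ (2 * n) := by
      rw [← Real.rpow_add hzkh]; ring_nf
    rw [hBv]
    calc (znorm h.1 ^ n * Real.sqrt (cnormSq (v h.1)) * znorm (k - h.1) ^ n) ^ 2
        = (znorm h.1 ^ n * znorm h.1 ^ n) * Real.sqrt (cnormSq (v h.1)) ^ 2 *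
            (znorm (k - h.1) ^ n * znorm (k - h.1) ^ n) := by ring
      _ = _ := by rw [e1, e2, Real.sq_sqrt (cnormSq_nonneg _)]
  have step5 : ∀ h : ι, ∑ i, b h i ^ 2 =
      ENNReal.ofReal (znorm h.1 ^ (2 * n) * cnormSq (v h.1)) *
      ENNReal.ofReal (znorm (k - h.1) ^ (2 * n) * cnormSq (w (k - h.1))) := by
    intro h
    have : ∀ i, b h i ^ 2 = ENNReal.ofReal (Bv h ^ 2) * ENNReal.ofReal ‖w (k - h.1) i‖ ^ 2 := by
      intro i
      rw [hb, mul_pow, ENNReal.ofReal_pow (hBvnn h)]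
    rw [Finset.sum_congr rfl fun i _ => this i, ← Finset.mul_sum]
    have hsum : ∑ i, ENNReal.ofReal ‖w (k - h.1) i‖ ^ 2 =
        ENNReal.ofReal (cnormSq (w (k - h.1))) := by
      rw [cnormSq, ENNReal.ofReal_sum_of_nonneg (fun i _ => Complex.normSq_nonneg _)]
      refine Finset.sum_congr rfl fun i _ => ?_
      rw [← ENNReal.ofReal_pow (norm_nonneg _), Complex.sq_norm]
    rw [hsum, hBv2 h]
    rw [ENNReal.ofReal_mul (by have := znorm_nonneg h.1; have := cnormSq_nonneg (v h.1); positivity)]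
    rw [mul_assoc, ← ENNReal.ofReal_mul (by have := znorm_nonneg (k - h.1); positivity)]
  -- step 2+3+6 : assemble
  have hznSq : ENNReal.ofReal (cnormSq z) = ∑ i, ENNReal.ofReal ‖z i‖ ^ 2 := by
    rw [cnormSq, ENNReal.ofReal_sum_of_nonneg (fun i _ => Complex.normSq_nonneg _)]
    refine Finset.sum_congr rfl fun i _ => ?_
    rw [← ENNReal.ofReal_pow (norm_nonneg _), Complex.sq_norm]
  have hc2 : ENNReal.ofReal c ^ 2 = ENNReal.ofReal ((2 * Real.pi) ^ (-(d : ℝ))) := by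
    rw [← ENNReal.ofReal_pow hcnn]
    congr 1
    rw [hc, sq, ← Real.rpow_add h2pi]
    congr 1
    ring
  calc ENNReal.ofReal (cnormSq z) = ∑ i, ENNReal.ofReal ‖z i‖ ^ 2 := hznSq
    _ ≤ ∑ i, (ENNReal.ofReal c * ∑' h : ι, a h * b h i) ^ 2 :=
        Finset.sum_le_sum fun i _ => pow_le_pow_left₀ (by simp) (step1 i) 2
    _ = ENNReal.ofReal c ^ 2 * ∑ i, (∑' h : ι, a h * b h i) ^ 2 := by
        rw [Finset.mul_sum]; exact Finset.sum_congr rfl fun i _ => by rw [mul_pow]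
    _ ≤ ENNReal.ofReal c ^ 2 * ∑ i, (∑' h : ι, a h ^ 2) * (∑' h : ι, b h i ^ 2) := by
        refine mul_le_mul_right (Finset.sum_le_sum fun i _ => csENN a (fun h => b h i)) _
    _ = ENNReal.ofReal c ^ 2 * (Gn d n k * ∑ i, ∑' h : ι, b h i ^ 2) := by
        rw [step4, ← Finset.mul_sum]
    _ = ENNReal.ofReal c ^ 2 * (Gn d n k * ∑' h : ι, ∑ i, b h i ^ 2) := by
        rw [← Summable.tsum_finsetSum fun i _ => ENNReal.summable]
    _ = ENNReal.ofReal ((2 * Real.pi) ^ (-(d : ℝ))) * Gn d n k *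
        ∑' h : ι, ENNReal.ofReal (znorm h.1 ^ (2 * n) * cnormSq (v h.1)) *
          ENNReal.ofReal (znorm (k - h.1) ^ (2 * n) * cnormSq (w (k - h.1))) := by
        rw [hc2, tsum_congr step5, mul_assoc]
lemma sub_ne' {d : ℕ} {h k : Fin d → ℤ} (hhk : h ≠ k) : k - h ≠ 0 :=
  sub_ne_zero.mpr (Ne.symm hhk)

lemma double_sum_le {d : ℕ} (F W : (Fin d → ℤ) → ℝ≥0∞) :
    ∑' (k : {k : Fin d → ℤ // k ≠ 0}) (h : {h : Fin d → ℤ // h ≠ 0 ∧ h ≠ k.1}),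
      F h.1 * W (k.1 - h.1) ≤
    (∑' h : {h : Fin d → ℤ // h ≠ 0}, F h.1) *
      (∑' ℓ : {ℓ : Fin d → ℤ // ℓ ≠ 0}, W ℓ.1) := by
  rw [← ENNReal.tsum_sigma (fun (k : {k : Fin d → ℤ // k ≠ 0})
      (h : {h : Fin d → ℤ // h ≠ 0 ∧ h ≠ k.1}) => F h.1 * W (k.1 - h.1))]
  have h2 : ∑' p : (Σ k : {k : Fin d → ℤ // k ≠ 0}, {h : Fin d → ℤ // h ≠ 0 ∧ h ≠ k.1}),
        F p.2.1 * W (p.1.1 - p.2.1) ≤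
      ∑' q : {h : Fin d → ℤ // h ≠ 0} × {ℓ : Fin d → ℤ // ℓ ≠ 0}, F q.1.1 * W q.2.1 := by
    refine tsum_comp_le_tsum_of_injective
      (f := fun p : (Σ k : {k : Fin d → ℤ // k ≠ 0}, {h : Fin d → ℤ // h ≠ 0 ∧ h ≠ k.1}) =>
        ((⟨p.2.1, p.2.2.1⟩, ⟨p.1.1 - p.2.1, sub_ne' p.2.2.2⟩) :
          {h : Fin d → ℤ // h ≠ 0} × {ℓ : Fin d → ℤ // ℓ ≠ 0}))
      ?_ (fun q => F q.1.1 * W q.2.1)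
    rintro ⟨⟨k1, hk1⟩, ⟨h1, hh1⟩⟩ ⟨⟨k2, hk2⟩, ⟨h2, hh2⟩⟩ heq
    simp only [Prod.mk.injEq, Subtype.mk.injEq] at heq
    obtain ⟨e1, e2⟩ := heq
    have ek : k1 = k2 := by rw [e1] at e2; exact sub_left_injective e2
    subst ek; subst e1; rfl
  refine h2.trans (le_of_eq ?_)
  rw [ENNReal.tsum_prod (f := fun (a : {h : Fin d → ℤ // h ≠ 0}) (b : {ℓ : Fin d → ℤ // ℓ ≠ 0}) =>
    F a.1 * W b.1), ← ENNReal.tsum_mul_right]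
  exact tsum_congr fun h => ENNReal.tsum_mul_left


/-- for `n > d/2 + 1` and families `(v_h), (w_ℓ)` in `ℂ^d` with
`h·v_h = 0` and finite `Σ |h|^{2n}|v_h|²`, `Σ |ℓ|^{2n}|w_ℓ|²`, the coefficients
`z_k = i(2π)^{−d/2} Σ_{h ∈ ℤ^d_{0k}} [v_h·(k−h)](|k|^n − |k−h|^n) w_{k−h}` satisfy
`Σ_k |z_k|² ≤ (2π)^{−d} (sup_k G_n(k)) (Σ_h |h|^{2n}|v_h|²)(Σ_ℓ |ℓ|^{2n}|w_ℓ|²)`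
(the left-hand side and the supremum being taken in `[0,∞]`). -/
theorem stmt2 (d : ℕ) (hd : 2 ≤ d) (n : ℝ) (hn : (d : ℝ) / 2 + 1 < n)
    (v w : (Fin d → ℤ) → Fin d → ℂ)
    (hdiv : ∀ h : Fin d → ℤ, h ≠ 0 → ∑ i, (h i : ℂ) * v h i = 0)
    (hv : Summable (fun h : {h : Fin d → ℤ // h ≠ 0} =>
      znorm h.1 ^ (2 * n) * cnormSq (v h.1)))
    (hw : Summable (fun ℓ : {ℓ : Fin d → ℤ // ℓ ≠ 0} =>
      znorm ℓ.1 ^ (2 * n) * cnormSq (w ℓ.1)))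
    (z : (Fin d → ℤ) → Fin d → ℂ)
    (hz : ∀ k : Fin d → ℤ, k ≠ 0 → z k = fun i =>
      Complex.I * ((2 * Real.pi) ^ (-(d : ℝ) / 2) : ℝ) *
        ∑' h : {h : Fin d → ℤ // h ≠ 0 ∧ h ≠ k},
          (∑ r, v h.1 r * ((k r - h.1 r : ℤ) : ℂ)) *
            ((znorm k ^ n - znorm (k - h.1) ^ n : ℝ) : ℂ) * w (k - h.1) i) :
    ∑' k : {k : Fin d → ℤ // k ≠ 0}, ENNReal.ofReal (cnormSq (z k.1))
      ≤ ENNReal.ofReal ((2 * Real.pi) ^ (-(d : ℝ))) *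
        (⨆ k : {k : Fin d → ℤ // k ≠ 0}, Gn d n k.1) *
        ENNReal.ofReal (∑' h : {h : Fin d → ℤ // h ≠ 0},
          znorm h.1 ^ (2 * n) * cnormSq (v h.1)) *
        ENNReal.ofReal (∑' ℓ : {ℓ : Fin d → ℤ // ℓ ≠ 0},
          znorm ℓ.1 ^ (2 * n) * cnormSq (w ℓ.1)) := by
  have key : ∀ k : {k : Fin d → ℤ // k ≠ 0},
      ENNReal.ofReal (cnormSq (z k.1)) ≤
      ENNReal.ofReal ((2 * Real.pi) ^ (-(d : ℝ))) *
        (⨆ k' : {k' : Fin d → ℤ // k' ≠ 0}, Gn d n k'.1) *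
        ∑' h : {h : Fin d → ℤ // h ≠ 0 ∧ h ≠ k.1},
          ENNReal.ofReal (znorm h.1 ^ (2 * n) * cnormSq (v h.1)) *
          ENNReal.ofReal (znorm (k.1 - h.1) ^ (2 * n) * cnormSq (w (k.1 - h.1))) := by
    intro k
    refine (per_k n v w hdiv k.1 (z k.1) (hz k.1 k.2)).trans ?_
    exact mul_le_mul_left (mul_le_mul_right
      (le_iSup (fun k' : {k' : Fin d → ℤ // k' ≠ 0} => Gn d n k'.1) k) _) _
  calc ∑' k : {k : Fin d → ℤ // k ≠ 0}, ENNReal.ofReal (cnormSq (z k.1))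
      ≤ ∑' k : {k : Fin d → ℤ // k ≠ 0},
        ENNReal.ofReal ((2 * Real.pi) ^ (-(d : ℝ))) *
          (⨆ k' : {k' : Fin d → ℤ // k' ≠ 0}, Gn d n k'.1) *
          ∑' h : {h : Fin d → ℤ // h ≠ 0 ∧ h ≠ k.1},
            ENNReal.ofReal (znorm h.1 ^ (2 * n) * cnormSq (v h.1)) *
            ENNReal.ofReal (znorm (k.1 - h.1) ^ (2 * n) * cnormSq (w (k.1 - h.1))) :=
        ENNReal.tsum_le_tsum key
    _ = ENNReal.ofReal ((2 * Real.pi) ^ (-(d : ℝ))) *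
          (⨆ k' : {k' : Fin d → ℤ // k' ≠ 0}, Gn d n k'.1) *
          ∑' (k : {k : Fin d → ℤ // k ≠ 0}) (h : {h : Fin d → ℤ // h ≠ 0 ∧ h ≠ k.1}),
            ENNReal.ofReal (znorm h.1 ^ (2 * n) * cnormSq (v h.1)) *
            ENNReal.ofReal (znorm (k.1 - h.1) ^ (2 * n) * cnormSq (w (k.1 - h.1))) :=
        ENNReal.tsum_mul_left
    _ ≤ ENNReal.ofReal ((2 * Real.pi) ^ (-(d : ℝ))) *
          (⨆ k' : {k' : Fin d → ℤ // k' ≠ 0}, Gn d n k'.1) *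
          ((∑' h : {h : Fin d → ℤ // h ≠ 0},
            ENNReal.ofReal (znorm h.1 ^ (2 * n) * cnormSq (v h.1))) *
           (∑' ℓ : {ℓ : Fin d → ℤ // ℓ ≠ 0},
            ENNReal.ofReal (znorm ℓ.1 ^ (2 * n) * cnormSq (w ℓ.1)))) :=
        mul_le_mul_right (double_sum_le
          (fun h => ENNReal.ofReal (znorm h ^ (2 * n) * cnormSq (v h)))
          (fun ℓ => ENNReal.ofReal (znorm ℓ ^ (2 * n) * cnormSq (w ℓ)))) _
    _ = _ := by
        rw [← ENNReal.ofReal_tsum_of_nonneg (fun h => by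
            have := znorm_nonneg h.1; have := cnormSq_nonneg (v h.1); positivity) hv,
          ← ENNReal.ofReal_tsum_of_nonneg (fun ℓ => by
            have := znorm_nonneg ℓ.1; have := cnormSq_nonneg (w ℓ.1); positivity) hw,
          ← mul_assoc]
end
end

section
/- Let d ≥ 2 be an integer, ν ∈ (d,∞), and ρ ∈ (2√d, ∞). Then Σ_{h ∈ Z^d, |h| ≥ ρ} 1/|h|^ν ≤ (2 π^{d/2} / Γ(d/2)) Σ_{i=0}^{d−1} binom(d−1, i) · d^{(d−1−i)/2} / ( (ν − i − 1) (ρ − 2√d)^{ν−i−1} ). -/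
noncomputable section

open MeasureTheory Set Metric

namespace Stmt9Aux

variable {d : ℕ}

abbrev E (d : ℕ) := EuclideanSpace ℝ (Fin d)

def latpt (h : Fin d → ℤ) : E d := WithLp.toLp 2 (fun i => (h i : ℝ))

lemma znorm_eq (h : Fin d → ℤ) : znorm h = ‖latpt h‖ := by
  rw [EuclideanSpace.norm_eq, znorm]
  congr 1
  refine Finset.sum_congr rfl fun i _ => ?_
  rw [Real.norm_eq_abs, sq_abs]
  rfl

def cube (h : Fin d → ℤ) : Set (E d) :=
  (MeasurableEquiv.toLp 2 (Fin d → ℝ)).symm ⁻¹'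
    (Set.univ.pi fun i => Set.Ico ((h i : ℝ)) (h i + 1))

lemma mem_cube {h : Fin d → ℤ} {x : E d} :
    x ∈ cube h ↔ ∀ i, (h i : ℝ) ≤ x i ∧ x i < h i + 1 := by
  simp [cube, Set.mem_pi]

lemma measurableSet_cube (h : Fin d → ℤ) : MeasurableSet (cube h) :=
  (MeasurableEquiv.toLp 2 (Fin d → ℝ)).symm.measurable
    (MeasurableSet.univ_pi fun _ => measurableSet_Ico)

lemma volume_cube (h : Fin d → ℤ) : volume (cube h) = 1 := by
  rw [cube, (EuclideanSpace.volume_preserving_symm_measurableEquiv_toLp (Fin d)).measure_preimage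
    ((MeasurableSet.univ_pi fun _ => measurableSet_Ico).nullMeasurableSet)]
  simp [volume_pi_pi, Real.volume_Ico]

lemma cube_disjoint {h h' : Fin d → ℤ} (hne : h ≠ h') : Disjoint (cube h) (cube h') := by
  rw [Set.disjoint_left]
  intro x hx hx'
  rw [mem_cube] at hx hx'
  apply hne
  funext i
  have h1 : ⌊x i⌋ = h i := Int.floor_eq_iff.2 (by push_cast; exact hx i)
  have h2 : ⌊x i⌋ = h' i := Int.floor_eq_iff.2 (by push_cast; exact hx' i)
  rw [← h1, ← h2]

lemma dist_le {h : Fin d → ℤ} {x : E d}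
    (hx : ∀ i, (h i : ℝ) ≤ x i ∧ x i < h i + 1) :
    ‖x - latpt h‖ ≤ Real.sqrt d := by
  rw [EuclideanSpace.norm_eq]
  apply Real.sqrt_le_sqrt
  calc ∑ i, ‖(x - latpt h) i‖ ^ 2 ≤ ∑ _i : Fin d, 1 := by
        refine Finset.sum_le_sum fun i _ => ?_
        have hxi := hx i
        have : (x - latpt h) i = x i - (h i : ℝ) := by
          simp [latpt]
        rw [this, Real.norm_eq_abs, sq_abs]
        nlinarith [hxi.1, hxi.2]
    _ = (d : ℝ) := by simp

lemma key_integral (hd : 2 ≤ d) {ν : ℝ} (hν : (d : ℝ) < ν) {R a : ℝ}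
    (hR : 0 < R) :
    ∫ y in Ioi (R + a), y ^ (d - 1) * (y - a) ^ (-ν) =
      ∑ i ∈ Finset.range d, ((d - 1).choose i : ℝ) * a ^ (d - 1 - i) *
        (R ^ ((i : ℝ) - ν + 1) / (ν - i - 1)) := by
  have hd1 : 1 ≤ d := le_trans one_le_two hd
  have htrans : ∫ y in Ioi (R + a), y ^ (d - 1) * (y - a) ^ (-ν)
      = ∫ s in Ioi R, (s + a) ^ (d - 1) * s ^ (-ν) := by
    have := (measurePreserving_add_right (volume : Measure ℝ) a).setIntegral_preimage_emb
      (measurableEmbedding_addRight a) (fun y => y ^ (d - 1) * (y - a) ^ (-ν)) (Ioi (R + a))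
    rw [preimage_add_const_Ioi, add_sub_cancel_right] at this
    rw [← this]
    refine setIntegral_congr_fun measurableSet_Ioi fun s _ => ?_
    simp
  rw [htrans]
  have hexp : ∀ s ∈ Ioi R, (s + a) ^ (d - 1) * s ^ (-ν)
      = ∑ i ∈ Finset.range d, ((d - 1).choose i : ℝ) * a ^ (d - 1 - i) * s ^ ((i : ℝ) - ν) := by
    intro s hs
    have hs0 : 0 < s := lt_trans hR hs
    rw [add_pow]
    rw [Nat.sub_add_cancel hd1, Finset.sum_mul]
    refine Finset.sum_congr rfl fun i _ => ?_
    have : s ^ i * s ^ (-ν) = s ^ ((i : ℝ) - ν) := by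
      rw [← Real.rpow_natCast s i, ← Real.rpow_add hs0]
      ring_nf
    rw [← this]
    ring
  rw [setIntegral_congr_fun measurableSet_Ioi hexp]
  have hint : ∀ i ∈ Finset.range d, IntegrableOn
      (fun s => ((d - 1).choose i : ℝ) * a ^ (d - 1 - i) * s ^ ((i : ℝ) - ν)) (Ioi R) := by
    intro i hi
    refine Integrable.const_mul ?_ _
    exact integrableOn_Ioi_rpow_of_lt (by
      have : (i : ℝ) + 1 ≤ d := by
        have := Finset.mem_range.1 hi
        exact_mod_cast Nat.succ_le_of_lt this
      linarith) hR
  rw [integral_finset_sum _ hint]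
  refine Finset.sum_congr rfl fun i hi => ?_
  rw [integral_const_mul]
  have hlt : (i : ℝ) - ν < -1 := by
    have : (i : ℝ) + 1 ≤ d := by
      have := Finset.mem_range.1 hi
      exact_mod_cast Nat.succ_le_of_lt this
    linarith
  rw [integral_Ioi_rpow_of_lt hlt hR]
  have h1 : (i : ℝ) - ν + 1 = -(ν - i - 1) := by ring
  rw [show -R ^ ((i : ℝ) - ν + 1) / ((i : ℝ) - ν + 1)
      = R ^ ((i : ℝ) - ν + 1) / (ν - i - 1) by rw [h1]; rw [div_neg, neg_div, neg_neg]]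

end Stmt9Aux

open Stmt9Aux

set_option maxHeartbeats 2000000 in
/-- for `ν ∈ (d,∞)` and `ρ ∈ (2√d, ∞)`,
`Σ_{h ∈ ℤ^d, |h| ≥ ρ} 1/|h|^ν ≤ (2 π^{d/2}/Γ(d/2)) Σ_{i=0}^{d−1} C(d−1,i)
  d^{(d−1−i)/2} / ((ν−i−1)(ρ−2√d)^{ν−i−1})`  (stated in `[0,∞]`). -/
theorem stmt9 (d : ℕ) (hd : 2 ≤ d) (ν : ℝ) (hν : (d : ℝ) < ν)
    (ρ : ℝ) (hρ : 2 * Real.sqrt d < ρ) :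
    ∑' h : {h : Fin d → ℤ // ρ ≤ znorm h}, ENNReal.ofReal (1 / znorm h.1 ^ ν)
      ≤ ENNReal.ofReal (2 * Real.pi ^ ((d : ℝ) / 2) / Real.Gamma ((d : ℝ) / 2) *
          ∑ i ∈ Finset.range d, ((d - 1).choose i : ℝ) * (d : ℝ) ^ (((d : ℝ) - 1 - i) / 2) /
            ((ν - i - 1) * (ρ - 2 * Real.sqrt d) ^ (ν - i - 1))) := by
  haveI : NeZero d := ⟨by omega⟩
  set a : ℝ := Real.sqrt d with ha_def
  have ha : 0 ≤ a := Real.sqrt_nonneg d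
  set R : ℝ := ρ - 2 * a with hR_def
  have hR : 0 < R := by simp only [hR_def]; linarith
  have hρa : 0 < ρ - a := by linarith
  have hν0 : 0 < ν := lt_of_le_of_lt (by positivity) hν
  -- the radial majorant
  set F : ℝ → ℝ := Set.indicator (Ici (ρ - a)) (fun r => (r - a) ^ (-ν)) with hF_def
  have hFmeas : Measurable F := by
    apply Measurable.indicator ?_ measurableSet_Ici
    fun_prop
  have hFnn : ∀ r, 0 ≤ F r := by
    intro r
    apply Set.indicator_nonneg
    intro r hr
    have : 0 ≤ r - a := by have := mem_Ici.1 hr; linarith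
    positivity
  -- termwise: each lattice term is bounded by the integral of F∘norm over its cube
  have key : ∀ h : {h : Fin d → ℤ // ρ ≤ znorm h},
      ENNReal.ofReal (1 / znorm h.1 ^ ν) ≤
        ∫⁻ x in cube h.1, ENNReal.ofReal (F ‖x‖) ∂volume := by
    rintro ⟨h, hh⟩
    have hstep : ENNReal.ofReal (1 / znorm h ^ ν) =
        ∫⁻ _x in cube h, ENNReal.ofReal (1 / znorm h ^ ν) ∂volume := by
      rw [setLIntegral_const, volume_cube, mul_one]
    rw [hstep]
    refine setLIntegral_mono ((hFmeas.comp measurable_norm).ennreal_ofReal) fun x hx => ?_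
    rw [mem_cube] at hx
    have hdist : ‖x - latpt h‖ ≤ a := dist_le hx
    have habs : |‖x‖ - ‖latpt h‖| ≤ ‖x - latpt h‖ := abs_norm_sub_norm_le _ _
    rw [abs_le] at habs
    have hzn : znorm h = ‖latpt h‖ := znorm_eq h
    have h1 : ρ - a ≤ ‖x‖ := by
      have : ρ ≤ ‖latpt h‖ := hzn ▸ hh
      linarith [habs.1]
    have h2 : ‖x‖ - a ≤ znorm h := by
      rw [hzn]; linarith [habs.2]
    have h3 : 0 < ‖x‖ - a := by linarith
    have hF : F ‖x‖ = (‖x‖ - a) ^ (-ν) := Set.indicator_of_mem (mem_Ici.2 h1) _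
    rw [hF]
    apply ENNReal.ofReal_le_ofReal
    have hzn_pos : 0 < znorm h := lt_of_lt_of_le (by rw [hzn] at hh ⊢; linarith) le_rfl
    rw [one_div, ← Real.rpow_neg hzn_pos.le]
    exact Real.rpow_le_rpow_of_nonpos h3 h2 (by linarith)
  -- sum the cube integrals
  calc ∑' h : {h : Fin d → ℤ // ρ ≤ znorm h}, ENNReal.ofReal (1 / znorm h.1 ^ ν)
      ≤ ∑' h : {h : Fin d → ℤ // ρ ≤ znorm h},
          ∫⁻ x in cube h.1, ENNReal.ofReal (F ‖x‖) ∂volume := ENNReal.tsum_le_tsum key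
    _ = ∫⁻ x in ⋃ h : {h : Fin d → ℤ // ρ ≤ znorm h}, cube h.1,
          ENNReal.ofReal (F ‖x‖) ∂volume := by
        rw [lintegral_iUnion (fun h => measurableSet_cube h.1)
          (fun h h' hne => cube_disjoint (fun hc => hne (Subtype.ext hc)))]
    _ ≤ ∫⁻ x, ENNReal.ofReal (F ‖x‖) ∂volume := setLIntegral_le_lintegral _ _
    _ = ENNReal.ofReal (∫ x : E d, F ‖x‖) := by
        refine (ofReal_integral_eq_lintegral_ofReal ?_ (Filter.Eventually.of_forall
          fun x => hFnn _)).symm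
        -- integrability via the japanese bracket bound
        set c : ℝ := R / (1 + ρ - a) with hc_def
        have hden : 0 < 1 + ρ - a := by linarith
        have hc : 0 < c := div_pos hR hden
        have hc1 : c ≤ 1 := by
          rw [hc_def, div_le_one hden]; simp only [hR_def]; linarith
        have hck : c * (1 + ρ - a) = R := div_mul_cancel₀ _ (ne_of_gt hden)
        have hbound : ∀ x : E d, ‖F ‖x‖‖ ≤ ‖c ^ (-ν) * (1 + ‖x‖) ^ (-ν)‖ := by
          intro x
          have hx0 : (0:ℝ) ≤ ‖x‖ := norm_nonneg x
          have h1x : (0:ℝ) < 1 + ‖x‖ := by linarith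
          have hrhs : 0 ≤ c ^ (-ν) * (1 + ‖x‖) ^ (-ν) := by positivity
          rw [Real.norm_eq_abs, Real.norm_eq_abs, abs_of_nonneg (hFnn _), abs_of_nonneg hrhs]
          by_cases hmem : ‖x‖ ∈ Ici (ρ - a)
          · rw [hF_def, Set.indicator_of_mem hmem]
            have hxge : ρ - a ≤ ‖x‖ := mem_Ici.1 hmem
            have hkey : c * (1 + ‖x‖) ≤ ‖x‖ - a := by nlinarith
            have hcpos : 0 < c * (1 + ‖x‖) := by positivity
            calc (‖x‖ - a) ^ (-ν) ≤ (c * (1 + ‖x‖)) ^ (-ν) :=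
                  Real.rpow_le_rpow_of_nonpos hcpos hkey (by linarith)
              _ = c ^ (-ν) * (1 + ‖x‖) ^ (-ν) := Real.mul_rpow hc.le h1x.le
          · rw [hF_def, Set.indicator_of_notMem hmem]
            exact hrhs
        have hint : Integrable (fun x : E d => c ^ (-ν) * (1 + ‖x‖) ^ (-ν)) :=
          (integrable_one_add_norm (by
            rw [finrank_euclideanSpace_fin]; exact hν)).const_mul _
        exact hint.mono ((hFmeas.comp measurable_norm).aestronglyMeasurable)
          (Filter.Eventually.of_forall hbound)
    _ ≤ ENNReal.ofReal (2 * Real.pi ^ ((d : ℝ) / 2) / Real.Gamma ((d : ℝ) / 2) *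
          ∑ i ∈ Finset.range d, ((d - 1).choose i : ℝ) * (d : ℝ) ^ (((d : ℝ) - 1 - i) / 2) /
            ((ν - i - 1) * (ρ - 2 * Real.sqrt d) ^ (ν - i - 1))) := by
        apply ENNReal.ofReal_le_ofReal
        apply le_of_eq
        -- polar coordinates
        haveI : Nontrivial (E d) := by
          have : (0 : E d) ≠ EuclideanSpace.single (0 : Fin d) (1:ℝ) := by
            intro hcontra
            have := congrFun (congrArg (fun v : E d => (v : Fin d → ℝ)) hcontra) 0
            simp [EuclideanSpace.single] at this
          exact ⟨⟨_, _, this⟩⟩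
        rw [integral_fun_norm_addHaar (volume : Measure (E d)) F]
        rw [finrank_euclideanSpace_fin]
        -- compute the one-dimensional integral
        have hJ : ∫ y in Ioi (0:ℝ), y ^ (d - 1) • F y =
            ∑ i ∈ Finset.range d, ((d - 1).choose i : ℝ) * a ^ (d - 1 - i) *
              (R ^ ((i : ℝ) - ν + 1) / (ν - i - 1)) := by
          have hind : ∀ y ∈ Ioi (0:ℝ), y ^ (d - 1) • F y =
              Set.indicator (Ici (ρ - a)) (fun y => y ^ (d - 1) * (y - a) ^ (-ν)) y := by
            intro y _
            by_cases hy : y ∈ Ici (ρ - a)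
            · rw [hF_def, Set.indicator_of_mem hy, Set.indicator_of_mem hy, smul_eq_mul]
            · rw [hF_def, Set.indicator_of_notMem hy, Set.indicator_of_notMem hy,
                smul_eq_mul, mul_zero]
          rw [setIntegral_congr_fun measurableSet_Ioi hind,
            setIntegral_indicator measurableSet_Ici,
            show Ioi (0:ℝ) ∩ Ici (ρ - a) = Ici (ρ - a) from
              inter_eq_right.2 fun y hy => lt_of_lt_of_le hρa (mem_Ici.1 hy),
            integral_Ici_eq_integral_Ioi,
            show ρ - a = R + a by rw [hR_def]; ring,
            key_integral hd hν hR]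
        rw [hJ]
        -- volume of the unit ball
        have hvol : volume.real (ball (0 : E d) 1) =
            Real.sqrt Real.pi ^ d / Real.Gamma (d / 2 + 1) := by
          rw [measureReal_def, EuclideanSpace.volume_ball, Fintype.card_fin]
          simp only [ENNReal.ofReal_one, one_pow, one_mul]
          rw [ENNReal.toReal_ofReal (by positivity)]
        rw [hvol]
        rw [nsmul_eq_mul, smul_eq_mul]
        -- final arithmetic
        have hΓpos : 0 < Real.Gamma ((d:ℝ) / 2) :=
          Real.Gamma_pos_of_pos (by positivity)
        have hΓadd : Real.Gamma ((d:ℝ) / 2 + 1) = ((d:ℝ) / 2) * Real.Gamma ((d:ℝ) / 2) :=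
          Real.Gamma_add_one (by positivity)
        have hsqrtpi : Real.sqrt Real.pi ^ d = Real.pi ^ ((d : ℝ) / 2) := by
          rw [Real.sqrt_eq_rpow, ← Real.rpow_natCast (Real.pi ^ ((1:ℝ)/2)) d,
            ← Real.rpow_mul Real.pi_pos.le]
          congr 1
          ring
        have hconst : (d : ℝ) * (Real.sqrt Real.pi ^ d / Real.Gamma ((d:ℝ) / 2 + 1)) =
            2 * Real.pi ^ ((d : ℝ) / 2) / Real.Gamma ((d : ℝ) / 2) := by
          rw [hsqrtpi, hΓadd]
          have hd0 : (0:ℝ) < d := by positivity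
          field_simp
        rw [← mul_assoc, hconst]
        congr 1
        refine Finset.sum_congr rfl fun i hi => ?_
        have hi' : i < d := Finset.mem_range.1 hi
        have hterm1 : a ^ (d - 1 - i) = (d : ℝ) ^ (((d : ℝ) - 1 - i) / 2) := by
          rw [ha_def, Real.sqrt_eq_rpow, ← Real.rpow_natCast ((d:ℝ) ^ ((1:ℝ)/2)) (d - 1 - i),
            ← Real.rpow_mul (Nat.cast_nonneg d)]
          congr 1
          have : ((d - 1 - i : ℕ) : ℝ) = (d : ℝ) - 1 - i := by
            have h1 : i ≤ d - 1 := by omega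
            have h2 : 1 ≤ d := by omega
            push_cast [Nat.cast_sub h1, Nat.cast_sub h2]
            ring
          rw [this]
          ring
        have hterm2 : R ^ ((i : ℝ) - ν + 1) = (R ^ (ν - i - 1))⁻¹ := by
          rw [show (i : ℝ) - ν + 1 = -(ν - i - 1) by ring, Real.rpow_neg hR.le]
        rw [hterm1, hterm2]
        rw [show ρ - 2 * Real.sqrt d = R by rw [hR_def, ha_def]]
        have hνi : (0:ℝ) < ν - i - 1 := by
          have : (i : ℝ) + 1 ≤ d := by exact_mod_cast Nat.succ_le_of_lt hi'
          linarith
        have hRp : (0:ℝ) < R ^ (ν - i - 1) := Real.rpow_pos_of_pos hR _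
        have hsplit : (R ^ (ν - (i:ℝ) - 1))⁻¹ / (ν - (i:ℝ) - 1)
            = ((ν - (i:ℝ) - 1) * R ^ (ν - (i:ℝ) - 1))⁻¹ := by
          rw [div_eq_mul_inv, ← mul_inv, mul_comm]
        rw [hsplit]
        exact (div_eq_mul_inv _ _).symm
end
end
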